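/- (Rigidity of repeatable measurements.) Let H_S and H_A be finite-dimensional complex Hilbert spaces, L_S a self-adjoint operator on H_S, L_A a self-adjoint operator on H_A, and let U be a unitary operator on H_S ⊗ H_A commuting with L_S ⊗ 1 + 1 ⊗ L_A. Let ψ0, ψ1 ∈ H_S be orthogonal unit vectors with ⟨ψ0, L_S ψ1⟩ ≠ 0, let Ω ∈ H_A be a unit vector, and suppose the measurement is repeatable in the sense that U(ψ_j ⊗ Ω) = ψ_j ⊗ φ_j for unit vectors φ_0, φ_1 ∈ H_A (j = 0, 1). Then φ_0 = φ_1; in particular the final apparatus states are identical and carry no information distinguishing ψ0 from ψ1. -/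

import Mathlib

open Matrix Kronecker
open scoped ComplexOrder

-- Positive semidefinite square root (zero if not PSD).
open Classical in
noncomputable def psqrt {n : Type*} [Fintype n] [DecidableEq n] (A : Matrix n n ℂ) :
    Matrix n n ℂ :=
  if h : A.PosSemidef then
    h.1.eigenvectorUnitary.1 * diagonal ((↑) ∘ Real.sqrt ∘ h.1.eigenvalues) *
      (star h.1.eigenvectorUnitary : Matrix n n ℂ)
  else 0

/-- Fidelity F(ρ0,ρ1) = tr √(√ρ0 ρ1 √ρ0). -/
noncomputable def fidelity {n : Type*} [Fintype n] [DecidableEq n] (ρ0 ρ1 : Matrix n n ℂ) : ℝ :=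
  (psqrt (psqrt ρ0 * ρ1 * psqrt ρ0)).trace.re

/-- Operator (ℓ²→ℓ²) norm of a matrix. -/
noncomputable def opNorm {n : Type*} [Fintype n] [DecidableEq n] (A : Matrix n n ℂ) : ℝ :=
  ‖LinearMap.toContinuousLinearMap (Matrix.toEuclideanLin A)‖

/-- Partial trace over the right (second) factor. -/
noncomputable def ptraceRight {m n : Type*} [Fintype m] [Fintype n]
    (ρ : Matrix (m × n) (m × n) ℂ) : Matrix m m ℂ :=
  Matrix.of fun i j => ∑ k, ρ (i, k) (j, k)

/-- Partial trace over the left (first) factor. -/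
noncomputable def ptraceLeft {m n : Type*} [Fintype m] [Fintype n]
    (ρ : Matrix (m × n) (m × n) ℂ) : Matrix n n ℂ :=
  Matrix.of fun i j => ∑ k, ρ (k, i) (k, j)



lemma vtens_dot {m n : Type*} [Fintype m] [Fintype n]
    (x u : m → ℂ) (y v : n → ℂ) :
    star (fun p : m × n => x p.1 * y p.2) ⬝ᵥ (fun p : m × n => u p.1 * v p.2)
      = (star x ⬝ᵥ u) * (star y ⬝ᵥ v) := by
  simp only [dotProduct, Fintype.sum_prod_type, Pi.star_apply, Finset.sum_mul,
    Finset.mul_sum, star_mul']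
  rw [Finset.sum_comm]; exact Finset.sum_congr rfl fun i _ => Finset.sum_congr rfl fun j _ => by ring

lemma kron_mulVec {m n : Type*} [Fintype m] [Fintype n]
    (A : Matrix m m ℂ) (B : Matrix n n ℂ) (x : m → ℂ) (y : n → ℂ) :
    (A ⊗ₖ B) *ᵥ (fun p : m × n => x p.1 * y p.2)
      = fun p : m × n => (A *ᵥ x) p.1 * (B *ᵥ y) p.2 := by
  funext p
  simp only [mulVec, dotProduct, Fintype.sum_prod_type, kroneckerMap_apply,
    Finset.sum_mul, Finset.mul_sum]
  rw [Finset.sum_comm]; exact Finset.sum_congr rfl fun i _ => Finset.sum_congr rfl fun j _ => by ring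

/-- Rigidity of repeatable measurements: the final apparatus states coincide. -/
theorem repeatable_measurement_rigidity
    {m n : Type*} [Fintype m] [Fintype n] [DecidableEq m] [DecidableEq n]
    (LS : Matrix m m ℂ) (hLS : LS.IsHermitian)
    (LA : Matrix n n ℂ) (hLA : LA.IsHermitian)
    (U : Matrix (m × n) (m × n) ℂ) (hU : Uᴴ * U = 1) (hU' : U * Uᴴ = 1)
    (hcomm : U * (LS ⊗ₖ (1 : Matrix n n ℂ) + (1 : Matrix m m ℂ) ⊗ₖ LA)
           = (LS ⊗ₖ (1 : Matrix n n ℂ) + (1 : Matrix m m ℂ) ⊗ₖ LA) * U)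
    (ψ0 ψ1 : m → ℂ) (hψ0 : star ψ0 ⬝ᵥ ψ0 = 1) (hψ1 : star ψ1 ⬝ᵥ ψ1 = 1)
    (horth : star ψ0 ⬝ᵥ ψ1 = 0)
    (hne : star ψ0 ⬝ᵥ (LS *ᵥ ψ1) ≠ 0)
    (Ω φ0 φ1 : n → ℂ) (hΩ : star Ω ⬝ᵥ Ω = 1)
    (hφ0 : star φ0 ⬝ᵥ φ0 = 1) (hφ1 : star φ1 ⬝ᵥ φ1 = 1)
    (hrep0 : U *ᵥ (fun p : m × n => ψ0 p.1 * Ω p.2) = fun p : m × n => ψ0 p.1 * φ0 p.2)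
    (hrep1 : U *ᵥ (fun p : m × n => ψ1 p.1 * Ω p.2) = fun p : m × n => ψ1 p.1 * φ1 p.2) :
    φ0 = φ1 := by
  set L := LS ⊗ₖ (1 : Matrix n n ℂ) + (1 : Matrix m m ℂ) ⊗ₖ LA with hL
  have hULU : Uᴴ * L * U = L := by
    rw [Matrix.mul_assoc, ← hcomm, ← Matrix.mul_assoc, hU, Matrix.one_mul]
  have key : ∀ a b : (m × n) → ℂ,
      star (U *ᵥ a) ⬝ᵥ (L *ᵥ (U *ᵥ b)) = star a ⬝ᵥ (L *ᵥ b) := by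
    intro a b
    rw [star_mulVec, ← Matrix.dotProduct_mulVec, Matrix.mulVec_mulVec,
      Matrix.mulVec_mulVec, hULU]
  have expand : ∀ (x u : m → ℂ) (y v : n → ℂ),
      star (fun p : m × n => x p.1 * y p.2) ⬝ᵥ (L *ᵥ (fun p : m × n => u p.1 * v p.2))
        = (star x ⬝ᵥ (LS *ᵥ u)) * (star y ⬝ᵥ v) + (star x ⬝ᵥ u) * (star y ⬝ᵥ (LA *ᵥ v)) := by
    intro x u y v
    rw [hL, Matrix.add_mulVec, dotProduct_add, kron_mulVec, kron_mulVec,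
      Matrix.one_mulVec, Matrix.one_mulVec, vtens_dot, vtens_dot]
  have h0 := key (fun p => ψ0 p.1 * Ω p.2) (fun p => ψ1 p.1 * Ω p.2)
  rw [hrep0, hrep1, expand, expand, horth, hΩ, zero_mul, add_zero, zero_mul,
    add_zero, mul_one] at h0
  have ha : star φ0 ⬝ᵥ φ1 = 1 := mul_left_cancel₀ hne (h0.trans (mul_one _).symm)
  have h10 : star φ1 ⬝ᵥ φ0 = 1 := by
    rw [← star_one ℂ, ← ha]
    simp [dotProduct, mul_comm]
  have hz : star (φ1 - φ0) ⬝ᵥ (φ1 - φ0) = 0 := by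
    simp [dotProduct_sub, sub_dotProduct, star_sub, hφ0, hφ1, ha, h10]
  exact (sub_eq_zero.mp (dotProduct_star_self_eq_zero.mp hz)).symm
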